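/- Suppose that both π and t are nilpotent elements of R. Let M be an S-module and let (q, f) be a hermitian quadratic form on M with values in R. If x, y ∈ M satisfy f(x, Π·y) = 1, then there exist elements x′, y′ in the S-submodule of M generated by x and y such that q(x′) = 0, q(y′) = 0, f(x′, y′) = 0 and f(x′, Π·y′) = 1. -/

import Mathlib

/-!
STATEMENT 13: Suppose `π` and `t` are nilpotent in `R`, let `S = R[Π] = R[T]/(T² - t·T + π)`,
let `M` be an `S`-module and `(q, f)` a hermitian quadratic form on `M` with values in `R`.
If `x, y ∈ M` satisfy `f(x, Π·y) = 1`, then there exist `x', y'` in the `S`-submodule of `M`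
generated by `x` and `y` with `q(x') = q(y') = 0`, `f(x', y') = 0` and `f(x', Π·y') = 1`.
-/

open Polynomial

noncomputable section

/-- The quadratic `R`-algebra `S = R[Π] := R[T]/(T² - t·T + π)`. -/
abbrev Squad (R : Type) [CommRing R] (t π : R) : Type :=
  AdjoinRoot (X ^ 2 - Polynomial.C t * X + Polynomial.C π)

/-- The image `Π` of `T` in `S = R[T]/(T² - t·T + π)`. -/
noncomputable def PiRoot (R : Type) [CommRing R] (t π : R) : Squad R t π :=
  AdjoinRoot.root _

/-- A hermitian quadratic form with values in `R` on a module `M` over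
`S = R[T]/(T² - t·T + π)`, relative to the involution `σ` and the norm `Nrm` of `S`. -/
structure HermitianQuadForm (R : Type) [CommRing R] (S : Type) [CommRing S] [Algebra R S]
    (σ : S → S) (Nrm : S → R) (M : Type) [AddCommGroup M] [Module S M] where
  q : M → R
  f : M → M → R
  f_symm : ∀ m n, f m n = f n m
  f_add_left : ∀ m m' n, f (m + m') n = f m n + f m' n
  f_smul_left : ∀ (r : R) (m n : M), f ((algebraMap R S r) • m) n = r * f m n
  polar : ∀ m n, f m n = q (m + n) - q m - q n
  q_smul : ∀ (x : S) (m : M), q (x • m) = Nrm x * q m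
  f_conj : ∀ (x : S) (m n : M), f (x • m) n = f m (σ x • n)

namespace St13Aux

section Ring

variable (R : Type) [CommRing R] (t π : R)

lemma lowdeg (a b : R) : (C a * X + C b).degree ≤ 1 := by compute_degree

lemma gmonic : (X ^ 2 - Polynomial.C t * X + Polynomial.C π).Monic := by
  have h : (X ^ 2 - Polynomial.C t * X + Polynomial.C π) = X^(1+1) + (C (-t) * X + C π) := by
    simp [map_neg]; ring
  rw [h]
  apply Polynomial.monic_X_pow_add
  exact lt_of_le_of_lt (lowdeg R (-t) π) (by exact_mod_cast one_lt_two)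

lemma gdeg [Nontrivial R] : (X ^ 2 - Polynomial.C t * X + Polynomial.C π).degree = 2 := by
  have h : (X ^ 2 - Polynomial.C t * X + Polynomial.C π) = X^2 + (C (-t) * X + C π) := by
    simp [map_neg]; ring
  have hlt : (C (-t) * X + C π).degree < (X^2 : R[X]).degree := by
    rw [degree_X_pow]
    exact lt_of_le_of_lt (lowdeg R (-t) π) (by exact_mod_cast one_lt_two)
  rw [h, degree_add_eq_left_of_degree_lt hlt, degree_X_pow]
  norm_cast

lemma mkCC (a b : R) : AdjoinRoot.mk (X ^ 2 - Polynomial.C t * X + Polynomial.C π) (C b * X + C a)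
    = algebraMap R (Squad R t π) a + algebraMap R (Squad R t π) b * PiRoot R t π := by
  simp only [map_add, map_mul, AdjoinRoot.mk_X, AdjoinRoot.mk_C, PiRoot, AdjoinRoot.algebraMap_eq]
  ring

lemma Pi_sq : (PiRoot R t π)^2
    = algebraMap R (Squad R t π) t * PiRoot R t π - algebraMap R (Squad R t π) π := by
  have h : AdjoinRoot.mk (X ^ 2 - Polynomial.C t * X + Polynomial.C π)
      (X ^ 2 - Polynomial.C t * X + Polynomial.C π) = 0 := AdjoinRoot.mk_self
  have h2 : AdjoinRoot.mk (X ^ 2 - Polynomial.C t * X + Polynomial.C π)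
      (X ^ 2 - Polynomial.C t * X + Polynomial.C π)
      = (PiRoot R t π)^2 - algebraMap R _ t * PiRoot R t π + algebraMap R _ π := by
    simp only [map_add, map_sub, map_mul, map_pow, AdjoinRoot.mk_X, AdjoinRoot.mk_C,
      PiRoot, AdjoinRoot.algebraMap_eq]
  rw [h2] at h
  linear_combination h

lemma repr_exists (s : Squad R t π) :
    ∃ a b : R, s = algebraMap R _ a + algebraMap R _ b * PiRoot R t π := by
  rcases subsingleton_or_nontrivial R with hR | hR
  · have key : ∀ u v : Squad R t π, u = v := by
      intro u v
      induction u using AdjoinRoot.induction_on with | ih p =>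
      induction v using AdjoinRoot.induction_on with | ih q =>
      congr 1
      exact Subsingleton.elim _ _
    exact ⟨0, 0, key _ _⟩
  · induction s using AdjoinRoot.induction_on with | ih p =>
    set g := (X ^ 2 - Polynomial.C t * X + Polynomial.C π) with hg
    refine ⟨(p %ₘ g).coeff 0, (p %ₘ g).coeff 1, ?_⟩
    have hdeg : (p %ₘ g).degree < 2 := by
      rw [← gdeg R t π]; exact degree_modByMonic_lt p (gmonic R t π)
    have h1 : (p %ₘ g).degree ≤ 1 := Order.le_of_lt_succ (by exact_mod_cast hdeg)
    have hrep : p %ₘ g = C ((p %ₘ g).coeff 1) * X + C ((p %ₘ g).coeff 0) :=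
      Polynomial.eq_X_add_C_of_degree_le_one h1
    have hsplit : p = g * (p /ₘ g) + (p %ₘ g) := by
      rw [add_comm]; exact (modByMonic_add_div p g).symm
    have hmk : AdjoinRoot.mk g p = AdjoinRoot.mk g (p %ₘ g) := by
      conv_lhs => rw [hsplit]
      rw [map_add, map_mul, AdjoinRoot.mk_self, zero_mul, zero_add]
    rw [hmk]
    conv_lhs => rw [hrep]
    exact mkCC R t π _ _

lemma repr_unique {a b : R} (hz : algebraMap R (Squad R t π) a
    + algebraMap R (Squad R t π) b * PiRoot R t π = 0) : a = 0 ∧ b = 0 := by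
  rcases subsingleton_or_nontrivial R with hR | hR
  · exact ⟨Subsingleton.elim _ _, Subsingleton.elim _ _⟩
  · set g := (X ^ 2 - Polynomial.C t * X + Polynomial.C π) with hg
    rw [← mkCC R t π a b, AdjoinRoot.mk_eq_zero] at hz
    have hzero : (C b * X + C a : R[X]) = 0 := by
      by_contra hne
      obtain ⟨k, hk⟩ := hz
      have hk' : (C b * X + C a : R[X]) = k * g := by rw [hk]; ring
      have hkne : k ≠ 0 := by
        rintro rfl; rw [zero_mul] at hk'; exact hne hk'
      have hdegk : (0 : WithBot ℕ) ≤ k.degree := Polynomial.zero_le_degree_iff.mpr hkne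
      have hdq : (C b * X + C a : R[X]).degree = k.degree + 2 := by
        rw [hk', (gmonic R t π).degree_mul, gdeg R t π]
      have h2 : (2 : WithBot ℕ) ≤ (C b * X + C a : R[X]).degree := by
        rw [hdq]
        calc (2 : WithBot ℕ) = 0 + 2 := by rw [zero_add]
        _ ≤ k.degree + 2 := add_le_add_left hdegk 2
      have hle := le_trans h2 (lowdeg R b a)
      exact absurd hle (by exact_mod_cast (by norm_num : ¬ (2:ℕ) ≤ 1))
    constructor
    · have hc := congrArg (fun p => Polynomial.coeff p 0) hzero
      simpa using hc
    · have hc := congrArg (fun p => Polynomial.coeff p 1) hzero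
      simpa using hc

lemma injA {a b : R} (hab : algebraMap R (Squad R t π) a = algebraMap R (Squad R t π) b) :
    a = b := by
  have hz : algebraMap R (Squad R t π) (a - b)
      + algebraMap R (Squad R t π) 0 * PiRoot R t π = 0 := by
    rw [map_sub, map_zero, zero_mul, add_zero, sub_eq_zero]; exact hab
  have h1 := (repr_unique R t π hz).1
  exact sub_eq_zero.mp h1

/-- Exact solution of `r = d + c r²` when `c` is nilpotent. -/
lemma quadfix {c : R} (hc : IsNilpotent c) (d : R) : ∃ r : R, r = d + c * r^2 := by
  obtain ⟨n, hn⟩ := hc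
  let g : ℕ → R := fun k => Nat.rec 0 (fun _ r => d + c * r^2) k
  have hgs : ∀ k, g (k+1) = d + c * (g k)^2 := fun k => rfl
  have key : ∀ k, ∃ e, g (k+1) - g k = c^k * e := by
    intro k; induction k with
    | zero => exact ⟨d, by simp [hgs, g]⟩
    | succ k ih =>
      obtain ⟨e, he⟩ := ih
      refine ⟨(g (k+1) + g k) * e, ?_⟩
      rw [hgs (k+1), hgs k]
      linear_combination c * (g (k+1) + g k) * he
  obtain ⟨e, he⟩ := key n
  have heq : g (n+1) = g n := by
    rw [hn, zero_mul] at he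
    linear_combination he
  exact ⟨g n, by conv_lhs => rw [← heq, hgs n]⟩

end Ring

section Form

variable {R : Type} [CommRing R] {t π : R} {σf : Squad R t π → Squad R t π}
  {Nrm : Squad R t π → R} {M : Type} [AddCommGroup M] [Module (Squad R t π) M]
  (h : HermitianQuadForm R (Squad R t π) σf Nrm M)

lemma b_zero_l (n : M) : h.f 0 n = 0 := by
  have h0 := h.f_add_left 0 0 n
  rw [add_zero] at h0
  linear_combination - h0

lemma b_add_r (m n n' : M) : h.f m (n + n') = h.f m n + h.f m n' := by
  rw [h.f_symm, h.f_add_left, h.f_symm n m, h.f_symm n' m]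

lemma b_neg_l (m n : M) : h.f (-m) n = - h.f m n := by
  have h0 := h.f_add_left m (-m) n
  rw [add_neg_cancel, b_zero_l] at h0
  linear_combination - h0

lemma b_sub_r (m n n' : M) : h.f m (n - n') = h.f m n - h.f m n' := by
  rw [sub_eq_add_neg n n', b_add_r, h.f_symm m (-n'), b_neg_l, h.f_symm n' m]
  ring

lemma b_smul_r (r : R) (m n : M) : h.f m ((algebraMap R (Squad R t π) r) • n) = r * h.f m n := by
  rw [h.f_symm, h.f_smul_left, h.f_symm n m]

lemma polarq (m n : M) : h.q (m + n) = h.q m + h.q n + h.f m n := by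
  have hp := h.polar m n
  linear_combination - hp

lemma smul_PP (n : M) : PiRoot R t π • (PiRoot R t π • n)
    = algebraMap R (Squad R t π) t • (PiRoot R t π • n) - algebraMap R (Squad R t π) π • n := by
  have hPP : PiRoot R t π * PiRoot R t π
      = algebraMap R (Squad R t π) t * PiRoot R t π - algebraMap R (Squad R t π) π := by
    rw [← pow_two]; exact Pi_sq R t π
  rw [smul_smul, hPP, sub_smul, mul_smul]

/-- The `S`-valued sesquilinear form associated to `h`. -/
def HS (m n : M) : Squad R t π :=
  algebraMap R (Squad R t π) (h.f m (PiRoot R t π • n))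
    - algebraMap R (Squad R t π) (h.f m n) * (algebraMap R (Squad R t π) t - PiRoot R t π)

lemma HS_add (m n n' : M) : HS h m (n + n') = HS h m n + HS h m n' := by
  simp only [HS, smul_add, b_add_r, map_add]
  ring

lemma HS_smulA (r : R) (m n : M) :
    HS h m ((algebraMap R (Squad R t π) r) • n) = HS h m n * algebraMap R (Squad R t π) r := by
  have hc : PiRoot R t π • ((algebraMap R (Squad R t π) r) • n)
      = (algebraMap R (Squad R t π) r) • (PiRoot R t π • n) := by
    rw [smul_smul, smul_smul]
    exact congrArg (fun s : Squad R t π => s • n) (mul_comm _ _)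
  simp only [HS, hc, b_smul_r, map_mul]
  ring

lemma HS_smulP (m n : M) : HS h m (PiRoot R t π • n) = HS h m n * PiRoot R t π := by
  have hbb : h.f m (PiRoot R t π • (PiRoot R t π • n))
      = t * h.f m (PiRoot R t π • n) - π * h.f m n := by
    rw [smul_PP, b_sub_r, b_smul_r, b_smul_r]
  simp only [HS, hbb, map_sub, map_mul]
  linear_combination (- algebraMap R (Squad R t π) (h.f m n)) * Pi_sq R t π

lemma HS_smul (s : Squad R t π) (m n : M) : HS h m (s • n) = HS h m n * s := by
  obtain ⟨u, v, huv⟩ := repr_exists R t π s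
  rw [huv, add_smul, HS_add, HS_smulA, mul_smul, HS_smulA, HS_smulP, mul_add]
  ring

lemma HS_one (m n : M) (hmn : HS h m n = 1) :
    h.f m n = 0 ∧ h.f m (PiRoot R t π • n) = 1 := by
  simp only [HS] at hmn
  have hz : algebraMap R (Squad R t π) (h.f m (PiRoot R t π • n) - t * (h.f m n) - 1)
      + algebraMap R (Squad R t π) (h.f m n) * PiRoot R t π = 0 := by
    simp only [map_sub, map_mul, map_one]
    linear_combination hmn
  obtain ⟨h1, h2⟩ := repr_unique R t π hz
  refine ⟨h2, ?_⟩
  rw [h2] at h1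
  linear_combination h1

end Form

end St13Aux

open St13Aux in
theorem statement13 (R : Type) [CommRing R] (t π : R)
    (hπ : IsNilpotent π) (ht : IsNilpotent t)
    (σ : Squad R t π →ₐ[R] Squad R t π)
    (hσ : σ (PiRoot R t π) = algebraMap R (Squad R t π) t - PiRoot R t π)
    (Nrm : Squad R t π → R)
    (hN : ∀ x : Squad R t π, x * σ x = algebraMap R (Squad R t π) (Nrm x))
    (M : Type) [AddCommGroup M] [Module (Squad R t π) M]
    (h : HermitianQuadForm R (Squad R t π) (⇑σ) Nrm M)
    (x y : M) (hxy : h.f x (PiRoot R t π • y) = 1) :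
    ∃ x' y' : M,
      x' ∈ Submodule.span (Squad R t π) ({x, y} : Set M) ∧
      y' ∈ Submodule.span (Squad R t π) ({x, y} : Set M) ∧
      h.q x' = 0 ∧ h.q y' = 0 ∧ h.f x' y' = 0 ∧ h.f x' (PiRoot R t π • y') = 1 := by
  classical
  have hP2 := Pi_sq R t π
  have hNval : ∀ (s : Squad R t π) (v : R), s * σ s = algebraMap R (Squad R t π) v → Nrm s = v :=
    fun s v hs => injA R t π ((hN s).symm.trans hs)
  -- nilpotency facts
  have nAt : IsNilpotent (algebraMap R (Squad R t π) t) := ht.map (algebraMap R (Squad R t π))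
  have nAπ : IsNilpotent (algebraMap R (Squad R t π) π) := hπ.map (algebraMap R (Squad R t π))
  have nmul : ∀ u v : Squad R t π, IsNilpotent u → IsNilpotent (u * v) := fun u v hu =>
    (Commute.all u v).isNilpotent_mul_right hu
  have nadd : ∀ u v : Squad R t π, IsNilpotent u → IsNilpotent v → IsNilpotent (u + v) :=
    fun u v hu hv => (Commute.all u v).isNilpotent_add hu hv
  have nP : IsNilpotent (PiRoot R t π) := by
    have h2 : IsNilpotent ((PiRoot R t π)^2) := by
      rw [hP2]
      simp only [sub_eq_add_neg]
      exact nadd _ _ (nmul _ _ nAt) nAπ.neg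
    obtain ⟨n, hn⟩ := h2
    exact ⟨2*n, by rw [pow_mul]; exact hn⟩
  have nAtP : IsNilpotent (algebraMap R (Squad R t π) t - PiRoot R t π) := by
    simp only [sub_eq_add_neg]
    exact nadd _ _ nAt nP.neg
  -- sigma facts
  have σA : ∀ r : R, σ (algebraMap R (Squad R t π) r) = algebraMap R (Squad R t π) r :=
    fun r => σ.commutes r
  have σAtP : σ (algebraMap R (Squad R t π) t - PiRoot R t π) = PiRoot R t π := by
    rw [map_sub, σA, hσ]; ring
  -- q and norms
  have NrmP : Nrm (PiRoot R t π) = π := by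
    apply hNval
    rw [hσ]
    linear_combination - hP2
  have bmm : ∀ m : M, h.f m m = 2 * h.q m := by
    intro m
    have hN2 : Nrm (2 : Squad R t π) = 4 := by
      apply hNval
      have hσ2 : σ (2 : Squad R t π) = 2 := by
        rw [show ((2:Squad R t π)) = algebraMap R (Squad R t π) 2 by rw [map_ofNat], σA]
      rw [hσ2, show ((4:R)) = (2*2 : R) by norm_num, map_mul, map_ofNat]
    have hmm : m + m = (2 : Squad R t π) • m := (two_smul (Squad R t π) m).symm
    have hp := polarq h m m
    rw [hmm, h.q_smul, hN2] at hp
    linear_combination - hp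
  have bmPm : ∀ m : M, h.f m (PiRoot R t π • m) = t * h.q m := by
    intro m
    have hN1P : Nrm (1 + PiRoot R t π) = 1 + t + π := by
      apply hNval
      rw [map_add, map_one, hσ, map_add, map_add, map_one]
      linear_combination - hP2
    have hsum : m + PiRoot R t π • m = (1 + PiRoot R t π) • m := by rw [add_smul, one_smul]
    have hp := polarq h m (PiRoot R t π • m)
    rw [hsum, h.q_smul, hN1P, h.q_smul, NrmP] at hp
    linear_combination - hp
  -- span membership
  have hxN : x ∈ Submodule.span (Squad R t π) ({x, y} : Set M) :=
    Submodule.subset_span (by simp)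
  have hyN : y ∈ Submodule.span (Squad R t π) ({x, y} : Set M) :=
    Submodule.subset_span (by simp)
  -- Step 1: rescale y so that HS x y = 1
  have hexy : HS h x y = 1 - (algebraMap R (Squad R t π) (t * h.f x y)
      - algebraMap R (Squad R t π) (h.f x y) * PiRoot R t π) := by
    simp only [HS]
    rw [hxy, map_one, map_mul]
    ring
  have nU0 : IsNilpotent (algebraMap R (Squad R t π) (t * h.f x y)
      - algebraMap R (Squad R t π) (h.f x y) * PiRoot R t π) := by
    rw [map_mul]
    simp only [sub_eq_add_neg]
    exact nadd _ _ (nmul _ _ nAt)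
      ((Commute.all (algebraMap R (Squad R t π) (h.f x y)) (PiRoot R t π)).isNilpotent_mul_left
        nP).neg
  have hU0 : IsUnit (HS h x y) := by rw [hexy]; exact nU0.isUnit_one_sub
  obtain ⟨δ, hδ⟩ := hU0.exists_right_inv
  have hy₀N : δ • y ∈ Submodule.span (Squad R t π) ({x, y} : Set M) :=
    Submodule.smul_mem _ δ hyN
  have hHxy₀ : HS h x (δ • y) = 1 := by rw [HS_smul, hδ]
  obtain ⟨hbxy₀, hbxPy₀⟩ := HS_one h x (δ • y) hHxy₀
  set y₀ := δ • y with hy₀def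
  -- Step 2: kill q y₀
  have nπqx : IsNilpotent (π * h.q x) := (Commute.all π (h.q x)).isNilpotent_mul_right hπ
  obtain ⟨r, hr⟩ := quadfix R nπqx (h.q y₀)
  set a : Squad R t π := (algebraMap R (Squad R t π) t - PiRoot R t π)
    * algebraMap R (Squad R t π) (-r) with hadef
  have hy₁N : y₀ + a • x ∈ Submodule.span (Squad R t π) ({x, y} : Set M) :=
    Submodule.add_mem _ hy₀N (Submodule.smul_mem _ a hxN)
  have σa : σ a = algebraMap R (Squad R t π) (-r) * PiRoot R t π := by
    rw [hadef, map_mul, σAtP, σA]; ring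
  have hNa : Nrm a = π * r^2 := by
    apply hNval
    rw [σa, hadef, map_neg, map_mul, map_pow]
    linear_combination (-(algebraMap R (Squad R t π) r)^2) * hP2
  have hqy₁ : h.q (y₀ + a • x) = 0 := by
    have hba : h.f y₀ (a • x) = - r := by
      rw [h.f_symm, h.f_conj a x y₀, σa, mul_smul, b_smul_r, hbxPy₀]
      ring
    have hqa : h.q (a • x) = π * r^2 * h.q x := by rw [h.q_smul, hNa]
    rw [polarq, hqa, hba]
    linear_combination - hr
  have hHxy₁ : HS h x (y₀ + a • x)
      = 1 + (algebraMap R (Squad R t π) (t * h.q x)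
        - algebraMap R (Squad R t π) (2 * h.q x)
          * (algebraMap R (Squad R t π) t - PiRoot R t π)) * a := by
    rw [HS_add, hHxy₀, HS_smul]
    congr 2
    simp only [HS]
    rw [bmPm, bmm]
  have nV : IsNilpotent ((algebraMap R (Squad R t π) (t * h.q x)
      - algebraMap R (Squad R t π) (2 * h.q x)
        * (algebraMap R (Squad R t π) t - PiRoot R t π)) * a) := by
    apply (Commute.all _ _).isNilpotent_mul_left
    rw [hadef]
    exact nmul _ _ nAtP
  have hU1 : IsUnit (HS h x (y₀ + a • x)) := by
    rw [hHxy₁]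
    simpa using nV.neg.isUnit_one_sub
  obtain ⟨δ₁, hδ₁⟩ := hU1.exists_right_inv
  have hy₂N : δ₁ • (y₀ + a • x) ∈ Submodule.span (Squad R t π) ({x, y} : Set M) :=
    Submodule.smul_mem _ δ₁ hy₁N
  have hqy₂ : h.q (δ₁ • (y₀ + a • x)) = 0 := by rw [h.q_smul, hqy₁, mul_zero]
  have hHxy₂ : HS h x (δ₁ • (y₀ + a • x)) = 1 := by rw [HS_smul, hδ₁]
  obtain ⟨hbxy₂, hbxPy₂⟩ := HS_one h x _ hHxy₂
  set y₂ := δ₁ • (y₀ + a • x) with hy₂def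
  -- Step 3: kill q x
  set w : Squad R t π := algebraMap R (Squad R t π) (h.q x)
    * (algebraMap R (Squad R t π) t - PiRoot R t π) with hwdef
  have hx'N : x + w • y₂ ∈ Submodule.span (Squad R t π) ({x, y} : Set M) :=
    Submodule.add_mem _ hxN (Submodule.smul_mem _ w hy₂N)
  have σw : σ w = algebraMap R (Squad R t π) (h.q x) * PiRoot R t π := by
    rw [hwdef, map_mul, σA, σAtP]
  have hbw : ∀ z : M, h.f (w • y₂) z = h.q x * h.f y₂ (PiRoot R t π • z) := by
    intro z
    rw [h.f_conj w y₂ z, σw, mul_smul, b_smul_r]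
  have hby₂Px : h.f y₂ (PiRoot R t π • x) = -1 := by
    rw [h.f_symm, h.f_conj (PiRoot R t π) x y₂, hσ, sub_smul, b_sub_r, b_smul_r, hbxy₂, hbxPy₂]
    ring
  have hqx' : h.q (x + w • y₂) = 0 := by
    have hbxw : h.f x (w • y₂) = - h.q x := by
      rw [h.f_symm, hbw x, hby₂Px]
      ring
    rw [polarq, h.q_smul, hqy₂, hbxw]
    ring
  have hby₂Py₂ : h.f y₂ (PiRoot R t π • y₂) = 0 := by rw [bmPm, hqy₂, mul_zero]
  have hby₂y₂ : h.f y₂ y₂ = 0 := by rw [bmm, hqy₂, mul_zero]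
  have hfin1 : h.f (x + w • y₂) y₂ = 0 := by
    rw [h.f_add_left, hbxy₂, hbw y₂, hby₂Py₂]
    ring
  have hfin2 : h.f (x + w • y₂) (PiRoot R t π • y₂) = 1 := by
    have hbpp : h.f y₂ (PiRoot R t π • (PiRoot R t π • y₂)) = 0 := by
      rw [smul_PP, b_sub_r, b_smul_r, b_smul_r, hby₂Py₂, hby₂y₂]
      ring
    rw [h.f_add_left, hbxPy₂, hbw (PiRoot R t π • y₂), hbpp]
    ring
  exact ⟨x + w • y₂, y₂, hx'N, hy₂N, hqx', hqy₂, hfin1, hfin2⟩
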